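/- Fix an expectile index τ ∈ (0,1). Let (ε_i)_{i≥1} be i.i.d. real random variables and let (X_i)_{i≥1} ⊂ ℝ^p be deterministic vectors satisfying (A1): ‖X_i‖₂ ≤ C₀ for all i, and (A2): Ω_n := n⁻¹·Σ_{i=1}^n X_iX_iᵀ converges, as n → ∞, to a p×p matrix Ω. Then the random matrices m^{−1}·Σ_{i=1}^m h_τ(ε_i)·X_iX_iᵀ converge in probability, entry by entry, to μ_h·Ω as m → ∞, where μ_h := E[h_τ(ε)]. -/

import Mathlib

open MeasureTheory ProbabilityTheory Filter
open scoped ProbabilityTheory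

/-- `h_τ(x) = 2τ·1_{x≥0} + 2(1−τ)·1_{x<0}`. -/
noncomputable def hFun (τ x : ℝ) : ℝ := if 0 ≤ x then 2 * τ else 2 * (1 - τ)

/-- Euclidean (`ℓ²`) norm on `ℝ^p`. -/
noncomputable def norm2 {p : ℕ} (v : Fin p → ℝ) : ℝ := Real.sqrt (∑ j, v j ^ 2)

lemma hFun_measurable (τ : ℝ) : Measurable (hFun τ) := by
  unfold hFun
  exact Measurable.ite measurableSet_Ici measurable_const measurable_const

lemma hFun_abs_le (τ : ℝ) (hτ : τ ∈ Set.Ioo (0 : ℝ) 1) (x : ℝ) : |hFun τ x| ≤ 2 := by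
  obtain ⟨h0, h1⟩ := hτ
  unfold hFun
  split <;> rw [abs_of_nonneg (by linarith)] <;> linarith

lemma abs_le_norm2 {p : ℕ} (v : Fin p → ℝ) (k : Fin p) : |v k| ≤ norm2 v := by
  rw [norm2, ← Real.sqrt_sq_eq_abs]
  exact Real.sqrt_le_sqrt (Finset.single_le_sum (f := fun j => v j ^ 2)
    (fun j _ => sq_nonneg _) (Finset.mem_univ k))

theorem stmt12 {Ω : Type*} [MeasureSpace Ω] [IsProbabilityMeasure (ℙ : Measure Ω)]
    (τ : ℝ) (hτ : τ ∈ Set.Ioo (0 : ℝ) 1) (p : ℕ) (hp : 1 ≤ p)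
    -- i.i.d. errors
    (ε : ℕ → Ω → ℝ) (hmeas : ∀ i, Measurable (ε i))
    (hindep : iIndepFun ε ℙ)
    (hident : ∀ i, Measure.map (ε i) ℙ = Measure.map (ε 0) ℙ)
    -- (A1)
    (C₀ : ℝ) (hC₀ : 0 < C₀) (X : ℕ → Fin p → ℝ) (hX : ∀ i, norm2 (X i) ≤ C₀)
    -- (A2): entrywise convergence of `Ω_n` to `Ω`
    (Ωmat : Matrix (Fin p) (Fin p) ℝ)
    (hΩ : ∀ j l, Tendsto (fun n : ℕ => (n : ℝ)⁻¹ * ∑ i ∈ Finset.Icc 1 n, X i j * X i l)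
      atTop (nhds (Ωmat j l))) :
    -- entrywise convergence in probability of `m⁻¹ Σ h_τ(ε_i) X_i X_iᵀ` to `μ_h·Ω`
    ∀ j l : Fin p, ∀ δ > (0 : ℝ),
      Tendsto (fun m : ℕ =>
        ℙ {ω | δ < |(m : ℝ)⁻¹ * (∑ i ∈ Finset.Icc 1 m, hFun τ (ε i ω) * (X i j * X i l))
            - (∫ ω', hFun τ (ε 0 ω')) * Ωmat j l|})
        atTop (nhds 0) := by
  intro j l δ hδ
  set μh : ℝ := ∫ ω', hFun τ (ε 0 ω') with hμh_def
  set a : ℕ → ℝ := fun i => X i j * X i l with ha_def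
  set Y : ℕ → Ω → ℝ := fun i ω => hFun τ (ε i ω) with hY_def
  have hYmeas : ∀ i, Measurable (Y i) := fun i => (hFun_measurable τ).comp (hmeas i)
  have habs : ∀ i, |a i| ≤ C₀ ^ 2 := by
    intro i
    have h1 : |X i j| ≤ C₀ := (abs_le_norm2 (X i) j).trans (hX i)
    have h2 : |X i l| ≤ C₀ := (abs_le_norm2 (X i) l).trans (hX i)
    calc |a i| = |X i j| * |X i l| := abs_mul _ _
      _ ≤ C₀ * C₀ := mul_le_mul h1 h2 (abs_nonneg _) hC₀.le
      _ = C₀ ^ 2 := (sq C₀).symm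
  have hYLp : ∀ i, MemLp (Y i) 2 ℙ := fun i =>
    MemLp.of_bound (hYmeas i).aestronglyMeasurable 2
      (Eventually.of_forall fun ω => by
        simpa [Real.norm_eq_abs] using hFun_abs_le τ hτ (ε i ω))
  -- transport integrals via identical distribution
  have key : ∀ (g : ℝ → ℝ), Measurable g → ∀ i,
      (∫ ω, g (ε i ω)) = ∫ ω, g (ε 0 ω) := by
    intro g hg i
    rw [← integral_map (hmeas i).aemeasurable hg.aestronglyMeasurable, hident i,
      integral_map (hmeas 0).aemeasurable hg.aestronglyMeasurable]
  have hmean : ∀ i, (∫ ω, Y i ω) = μh := fun i => key _ (hFun_measurable τ) i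
  have hvarY : ∀ i, variance (Y i) ℙ = variance (Y 0) ℙ := by
    intro i
    rw [variance_eq_sub (hYLp i), variance_eq_sub (hYLp 0)]
    have hsq : (∫ ω, (Y i ^ 2) ω) = ∫ ω, (Y 0 ^ 2) ω := by
      simpa using key (fun x => (hFun τ x) ^ 2) ((hFun_measurable τ).pow_const 2) i
    rw [hsq, hmean i, hmean 0]
  set V : ℝ := variance (Y 0) ℙ with hV_def
  have hV0 : 0 ≤ V := variance_nonneg _ _
  -- the summands
  set W : ℕ → Ω → ℝ := fun i ω => Y i ω * a i with hW_def
  have hWLp : ∀ i, MemLp (W i) 2 ℙ := by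
    intro i
    have h := (hYLp i).const_mul (a i)
    have : W i = fun ω => a i * Y i ω := by funext ω; simp [hW_def, mul_comm]
    rw [this]; exact h
  have hWvar : ∀ i, variance (W i) ℙ = (a i) ^ 2 * V := by
    intro i
    have : W i = (a i) • Y i := by
      funext ω; simp [hW_def, smul_eq_mul, mul_comm]
    rw [this, variance_smul, hvarY i]
  have hWindep : iIndepFun W ℙ := by
    have := hindep.comp (fun i => fun x : ℝ => hFun τ x * a i)
      (fun i => (hFun_measurable τ).mul_const (a i))
    exact this
  -- the normalized sums
  set S : ℕ → Ω → ℝ := fun m ω =>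
    (m : ℝ)⁻¹ * (∑ i ∈ Finset.Icc 1 m, hFun τ (ε i ω) * (X i j * X i l)) with hS_def
  have hSsmul : ∀ m : ℕ, S m = (m : ℝ)⁻¹ • (∑ i ∈ Finset.Icc 1 m, W i) := by
    intro m; funext ω
    simp [hS_def, hW_def, hY_def, ha_def, Finset.sum_apply, smul_eq_mul]
  have hSLp : ∀ m : ℕ, MemLp (S m) 2 ℙ := by
    intro m
    rw [hSsmul m]
    exact (memLp_finset_sum' _ fun i _ => hWLp i).const_smul _
  -- variance bound
  have hvarS : ∀ m : ℕ, 1 ≤ m → variance (S m) ℙ ≤ C₀ ^ 4 * V / m := by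
    intro m hm
    rw [hSsmul m, variance_smul',
      IndepFun.variance_sum (fun i _ => hWLp i)
        (fun i _ k _ hik => hWindep.indepFun hik)]
    have hsum : (∑ i ∈ Finset.Icc 1 m, variance (W i) ℙ) ≤ m * (C₀ ^ 4 * V) := by
      calc (∑ i ∈ Finset.Icc 1 m, variance (W i) ℙ)
          ≤ ∑ i ∈ Finset.Icc 1 m, C₀ ^ 4 * V := by
            apply Finset.sum_le_sum
            intro i _
            rw [hWvar i]
            have h1 : (a i) ^ 2 ≤ C₀ ^ 4 := by
              have := pow_le_pow_left₀ (abs_nonneg (a i)) (habs i) 2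
              rw [sq_abs] at this
              calc (a i) ^ 2 ≤ (C₀ ^ 2) ^ 2 := this
                _ = C₀ ^ 4 := by ring
            exact mul_le_mul_of_nonneg_right h1 hV0
        _ = m * (C₀ ^ 4 * V) := by
            rw [Finset.sum_const, Nat.card_Icc]
            simp [nsmul_eq_mul]
    have hminv : (0:ℝ) < (m:ℝ) := by exact_mod_cast hm
    calc ((m:ℝ)⁻¹) ^ 2 * (∑ i ∈ Finset.Icc 1 m, variance (W i) ℙ)
        ≤ ((m:ℝ)⁻¹) ^ 2 * (m * (C₀ ^ 4 * V)) :=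
          mul_le_mul_of_nonneg_left hsum (sq_nonneg _)
      _ = C₀ ^ 4 * V / m := by field_simp
  -- mean of S m
  have hES : ∀ m : ℕ, (∫ ω, S m ω) = μh * ((m:ℝ)⁻¹ * ∑ i ∈ Finset.Icc 1 m, a i) := by
    intro m
    have hint : ∀ i ∈ Finset.Icc 1 m, Integrable (W i) ℙ :=
      fun i _ => (hWLp i).integrable one_le_two
    have h1 : (∫ ω, S m ω) = (m:ℝ)⁻¹ * ∑ i ∈ Finset.Icc 1 m, ∫ ω, W i ω := by
      simp_rw [hS_def]
      rw [integral_const_mul, integral_finset_sum _ hint]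
    rw [h1]
    have h2 : ∀ i, (∫ ω, W i ω) = μh * a i := by
      intro i
      rw [hW_def]
      simp only
      rw [integral_mul_const, hmean i]
    simp_rw [h2, Finset.mul_sum]
    exact Finset.sum_congr rfl fun i _ => by ring
  -- deterministic convergence of the mean
  set T : ℝ := μh * Ωmat j l with hT_def
  have hD : Tendsto (fun m : ℕ => μh * ((m:ℝ)⁻¹ * ∑ i ∈ Finset.Icc 1 m, a i))
      atTop (nhds T) := (hΩ j l).const_mul μh
  have hDev : ∀ᶠ m : ℕ in atTop,
      |μh * ((m:ℝ)⁻¹ * ∑ i ∈ Finset.Icc 1 m, a i) - T| < δ / 2 := by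
    have hball := hD (Metric.ball_mem_nhds T (half_pos hδ))
    filter_upwards [hball] with m hm
    simpa [Real.dist_eq] using hm
  -- eventual bound on the probability
  set K : ℝ := (C₀ ^ 4 * V) / ((δ / 2) ^ 2) with hK_def
  have hbound : ∀ᶠ m : ℕ in atTop,
      ℙ {ω | δ < |S m ω - T|} ≤ ENNReal.ofReal (K / m) := by
    filter_upwards [hDev, eventually_ge_atTop 1] with m hDm hm1
    have hsub : {ω | δ < |S m ω - T|} ⊆ {ω | δ / 2 ≤ |S m ω - ∫ ω', S m ω'|} := by
      intro ω hω
      simp only [Set.mem_setOf_eq] at hω ⊢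
      rw [hES m]
      have h3 : |S m ω - T| ≤ |S m ω - μh * ((m:ℝ)⁻¹ * ∑ i ∈ Finset.Icc 1 m, a i)|
          + |μh * ((m:ℝ)⁻¹ * ∑ i ∈ Finset.Icc 1 m, a i) - T| := abs_sub_le _ _ _
      linarith [hDm, h3, hω]
    calc ℙ {ω | δ < |S m ω - T|}
        ≤ ℙ {ω | δ / 2 ≤ |S m ω - ∫ ω', S m ω'|} := measure_mono hsub
      _ ≤ ENNReal.ofReal (variance (S m) ℙ / (δ / 2) ^ 2) :=
          meas_ge_le_variance_div_sq (hSLp m) (half_pos hδ)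
      _ ≤ ENNReal.ofReal (K / m) := by
          apply ENNReal.ofReal_le_ofReal
          have h4 : variance (S m) ℙ / (δ / 2) ^ 2
              ≤ (C₀ ^ 4 * V / m) / (δ / 2) ^ 2 := by
            gcongr
            exact hvarS m hm1
          calc variance (S m) ℙ / (δ / 2) ^ 2
              ≤ (C₀ ^ 4 * V / m) / (δ / 2) ^ 2 := h4
            _ = K / m := by rw [hK_def]; ring
  -- squeeze
  have hK0 : Tendsto (fun m : ℕ => ENNReal.ofReal (K / m)) atTop (nhds 0) := by
    have h1 : Tendsto (fun m : ℕ => K / (m:ℝ)) atTop (nhds 0) :=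
      tendsto_const_div_atTop_nhds_zero_nat K
    have := (ENNReal.continuous_ofReal.tendsto 0).comp h1
    simpa [Function.comp_def] using this
  refine tendsto_of_tendsto_of_tendsto_of_le_of_le' tendsto_const_nhds hK0
    (Eventually.of_forall fun m => zero_le) ?_
  exact hbound
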